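/- Let b > 0 be real and n ≥ 1. The complex number −1/2 + ib is a root of the polynomial C(s+n+1, n+1) − C(s, n+1) if and only if ∑_{m=0}^{n} arccot(2b/(2m+1)) is an integer multiple of π, where arccot takes values in (0, π/2]. -/

import Mathlib

open Real

/-- The generalized binomial coefficient `C(y,m) = (1/m!)·∏_{j<m} (y-j)`. -/
noncomputable def genBinom (y : ℂ) (m : ℕ) : ℂ :=
  (∏ j ∈ Finset.range m, (y - j)) / (Nat.factorial m)

/-- For `b > 0`, `-1/2 + ib` is a root of `C(s+n+1,n+1) − C(s,n+1)` iff
`∑_{m=0}^{n} arccot(2b/(2m+1))` is an integer multiple of `π`, where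
`arccot(t) = arctan(1/t)` for `t > 0`. -/
theorem root_iff_arccot_sum (n : ℕ) (hn : 1 ≤ n) (b : ℝ) (hb : 0 < b) :
    genBinom ((-1/2 + b * Complex.I) + n + 1) (n + 1) -
        genBinom (-1/2 + b * Complex.I) (n + 1) = 0 ↔
      ∃ k : ℤ, ∑ m ∈ Finset.range (n + 1),
          Real.arctan ((2 * m + 1) / (2 * b)) = k * Real.pi := by
  have hb' : b ≠ 0 := hb.ne'
  set s : ℂ := -1/2 + b * Complex.I with hs
  set N := n + 1 with hN
  set S : ℝ := ∑ m ∈ Finset.range (n + 1),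
      Real.arctan ((2 * m + 1) / (2 * b)) with hSdef
  set P : ℂ := ∏ m ∈ Finset.range N, (s + m + 1) with hP
  -- positivity of cosines
  have hcos : ∀ x : ℝ, 0 < Real.cos (Real.arctan x) := by
    intro x
    rw [Real.cos_arctan]
    positivity
  -- step A : root condition iff product equality
  have keyA : genBinom (s + n + 1) (n + 1) - genBinom s (n + 1) = 0 ↔
      P = ∏ j ∈ Finset.range N, (s - j) := by
    have hfac : ((Nat.factorial (n + 1) : ℂ)) ≠ 0 := by
      exact_mod_cast Nat.factorial_ne_zero (n + 1)
    have reind : ∏ j ∈ Finset.range N, ((s + n + 1) - j) = P := by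
      rw [hP, ← Finset.prod_range_reflect (fun m => s + m + 1) N]
      refine Finset.prod_congr rfl fun j hj => ?_
      simp only [Finset.mem_range] at hj
      have hj' : j ≤ n := by omega
      have h1 : N - 1 - j = n - j := by omega
      have h2 : ((n - j : ℕ) : ℂ) = (n : ℂ) - j := by
        push_cast [Nat.cast_sub hj']
        ring
      simp only [h1, h2]
      ring
    rw [genBinom, genBinom, div_sub_div_same, div_eq_zero_iff, sub_eq_zero, reind]
    simp [hfac]
    exact Iff.rfl
  -- step B : product of (s - j) as conjugates
  have keyB : ∏ j ∈ Finset.range N, (s - j) = (-1 : ℂ)^N * (starRingEnd ℂ) P := by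
    have hterm : ∀ j : ℕ, s - (j : ℂ) = -((starRingEnd ℂ) (s + j + 1)) := by
      intro j
      simp only [hs, map_add, map_neg, map_div₀, map_one, map_ofNat, map_mul,
        Complex.conj_I, Complex.conj_ofReal, Complex.conj_natCast]
      ring
    calc ∏ j ∈ Finset.range N, (s - j)
        = ∏ j ∈ Finset.range N, ((-1 : ℂ) * (starRingEnd ℂ) (s + j + 1)) := by
          refine Finset.prod_congr rfl fun j _ => ?_
          rw [hterm j]; ring
      _ = (-1 : ℂ)^N * (starRingEnd ℂ) P := by
          rw [Finset.prod_mul_distrib, Finset.prod_const, Finset.card_range, hP,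
            map_prod]
  -- step C : the auxiliary product Q
  have keyC : ∏ m ∈ Finset.range N, (2*(b:ℂ) + (2*(m:ℂ)+1) * Complex.I)
      = (2*Complex.I)^N * (starRingEnd ℂ) P := by
    have hterm : ∀ m : ℕ, (2*(b:ℂ) + (2*(m:ℂ)+1) * Complex.I)
        = 2*Complex.I * (starRingEnd ℂ) (s + m + 1) := by
      intro m
      simp only [hs, map_add, map_neg, map_div₀, map_one, map_ofNat, map_mul,
        Complex.conj_I, Complex.conj_ofReal, Complex.conj_natCast]
      linear_combination (2*(b:ℂ)) * Complex.I_sq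
    calc ∏ m ∈ Finset.range N, (2*(b:ℂ) + (2*(m:ℂ)+1) * Complex.I)
        = ∏ m ∈ Finset.range N, (2*Complex.I * (starRingEnd ℂ) (s + m + 1)) :=
          Finset.prod_congr rfl fun m _ => hterm m
      _ = (2*Complex.I)^N * (starRingEnd ℂ) P := by
          rw [Finset.prod_mul_distrib, Finset.prod_const, Finset.card_range, hP,
            map_prod]
  -- step D : the auxiliary product in polar form
  set c : ℕ → ℝ := fun m => 2*b / Real.cos (Real.arctan ((2 * m + 1) / (2 * b)))
    with hc
  set C : ℝ := ∏ m ∈ Finset.range N, c m with hCdef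
  have hCpos : 0 < C := by
    refine Finset.prod_pos fun m _ => div_pos (by linarith) (hcos _)
  have factor : ∀ m : ℕ, (2*(b:ℂ) + (2*(m:ℂ)+1) * Complex.I)
      = (c m : ℂ) * Complex.exp ((Real.arctan ((2 * m + 1) / (2 * b)) : ℝ) * Complex.I) := by
    intro m
    set θ := Real.arctan ((2 * m + 1) / (2 * b)) with hθ
    have hcθ : Real.cos θ ≠ 0 := (hcos _).ne'
    have h1 : c m * Real.cos θ = 2*b := by
      rw [hc]; field_simp; rfl
    have ht := Real.tan_arctan ((2*m+1)/(2*b))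
    rw [← hθ, Real.tan_eq_sin_div_cos] at ht
    field_simp at ht
    have h2 : c m * Real.sin θ = 2*m+1 := by
      rw [hc]
      field_simp
      linarith [ht]
    apply Complex.ext
    · simp [Complex.add_re, Complex.mul_re, Complex.exp_ofReal_mul_I_re,
        Complex.exp_ofReal_mul_I_im, h1]
    · simp [Complex.add_im, Complex.mul_im, Complex.exp_ofReal_mul_I_re,
        Complex.exp_ofReal_mul_I_im, h2]
  have keyD : ∏ m ∈ Finset.range N, (2*(b:ℂ) + (2*(m:ℂ)+1) * Complex.I)
      = (C : ℂ) * Complex.exp ((S : ℝ) * Complex.I) := by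
    calc ∏ m ∈ Finset.range N, (2*(b:ℂ) + (2*(m:ℂ)+1) * Complex.I)
        = ∏ m ∈ Finset.range N,
            ((c m : ℂ) * Complex.exp ((Real.arctan ((2 * m + 1) / (2 * b)) : ℝ) * Complex.I)) :=
          Finset.prod_congr rfl fun m _ => factor m
      _ = (C : ℂ) * Complex.exp ((S : ℝ) * Complex.I) := by
          rw [Finset.prod_mul_distrib, ← Complex.exp_sum, ← Complex.ofReal_prod,
            ← Finset.sum_mul, hCdef, hSdef]
          norm_cast
  -- the imaginary part of Q
  have hQim : ((2*Complex.I)^N * (starRingEnd ℂ) P).im = C * Real.sin S := by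
    rw [← keyC, keyD]
    simp [Complex.mul_im, Complex.exp_ofReal_mul_I_im, Complex.exp_ofReal_mul_I_re]
  -- conjugate of Q
  have hconjQ : (starRingEnd ℂ) ((2*Complex.I)^N * (starRingEnd ℂ) P)
      = (-(2*Complex.I))^N * P := by
    rw [map_mul, map_pow, Complex.conj_conj, map_mul, Complex.conj_I, map_ofNat]
    ring
  -- the middle equivalence
  have hε : ((-1 : ℂ)^N) * ((-1 : ℂ)^N) = 1 := by
    rw [← pow_add, ← two_mul, pow_mul]
    norm_num
  have h2I : ((2*Complex.I)^N : ℂ) ≠ 0 := by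
    apply pow_ne_zero
    simp [Complex.I_ne_zero]
  have midequiv : P = (-1 : ℂ)^N * (starRingEnd ℂ) P ↔
      ((2*Complex.I)^N * (starRingEnd ℂ) P).im = 0 := by
    rw [← Complex.conj_eq_iff_im, hconjQ]
    constructor
    · intro h
      rw [neg_pow]
      calc (-1 : ℂ)^N * (2*Complex.I)^N * P
          = (-1 : ℂ)^N * (2*Complex.I)^N * ((-1 : ℂ)^N * (starRingEnd ℂ) P) := by rw [← h]
        _ = ((-1 : ℂ)^N * (-1 : ℂ)^N) * ((2*Complex.I)^N * (starRingEnd ℂ) P) := by ring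
        _ = (2*Complex.I)^N * (starRingEnd ℂ) P := by rw [hε, one_mul]
    · intro h
      rw [neg_pow] at h
      have h' : (2*Complex.I)^N * ((-1 : ℂ)^N * P) = (2*Complex.I)^N * (starRingEnd ℂ) P := by
        rw [← h]; ring
      have h'' := mul_left_cancel₀ h2I h'
      calc P = ((-1 : ℂ)^N * (-1 : ℂ)^N) * P := by rw [hε, one_mul]
        _ = (-1 : ℂ)^N * ((-1 : ℂ)^N * P) := by ring
        _ = (-1 : ℂ)^N * (starRingEnd ℂ) P := by rw [h'']
  -- assemble
  rw [keyA, keyB, midequiv, hQim]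
  have hsin : C * Real.sin S = 0 ↔ Real.sin S = 0 := by
    constructor
    · intro h
      rcases mul_eq_zero.mp h with h | h
      · exact absurd h hCpos.ne'
      · exact h
    · intro h; rw [h, mul_zero]
  rw [hsin, Real.sin_eq_zero_iff]
  constructor
  · rintro ⟨k, hk⟩; exact ⟨k, hk.symm⟩
  · rintro ⟨k, hk⟩; exact ⟨k, hk.symm⟩
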